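/- Let m ≥ 1 be an integer and let a_1, …, a_m, b_1, …, b_m, d be positive integers satisfying b_1 = 1, b_{i+1} ≤ a_i + b_i for all 1 ≤ i < m, and d ≤ a_m + b_m. For each i define c_i = Σ_{j=1}^{i−1} a_j (so c_1 = 0). Then Σ_{i=1}^{m} (a_i/(a_i + b_i)) · (∏_{j=1}^{i−1} b_j/(a_j + b_j)) · (b_i + c_i) + (∏_{i=1}^{m} b_i/(a_i + b_i)) · (a_m + c_m + d) ≤ 2m + 2. (This quantity is the expected distortion 𝔼[dist_𝒯(u,v)] of an edge (u,v) in the spanning tree 𝒯 produced by Emek and Peleg's Construct_Tree algorithm on a series-parallel graph whose composition trace has depth m, so the expected distortion of every edge is O(m).) -/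

import Mathlib

open Finset

lemma aux_prod16 (a b : ℕ → ℕ) : ∀ k, (∀ j, 1 ≤ j → j ≤ k → 0 < a j + b j) →
    (∀ j, 1 ≤ j → j ≤ k → b (j+1) ≤ a j + b j) →
    (∏ j ∈ Icc 1 k, (b j : ℝ) / ((a j : ℝ) + (b j : ℝ))) * (b (k+1) : ℝ) ≤ (b 1 : ℝ) := by
  intro k
  induction k with
  | zero => simp
  | succ n ihn =>
    intro hpos hle
    rw [Finset.prod_Icc_succ_top (by omega)]
    have hP : 0 ≤ ∏ j ∈ Icc 1 n, (b j : ℝ) / ((a j : ℝ) + (b j : ℝ)) := by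
      apply Finset.prod_nonneg; intro i _; positivity
    have hs : (0:ℝ) < (a (n+1) : ℝ) + (b (n+1) : ℝ) := by
      exact_mod_cast hpos (n+1) (by omega) le_rfl
    have h1 : ((b (n+1+1)) : ℝ) ≤ (a (n+1) : ℝ) + (b (n+1) : ℝ) := by
      exact_mod_cast hle (n+1) (by omega) le_rfl
    have step : (b (n+1):ℝ)/((a (n+1) : ℝ) + (b (n+1) : ℝ)) * (b (n+1+1) : ℝ) ≤ (b (n+1) : ℝ) := by
      rw [div_mul_eq_mul_div, div_le_iff₀ hs]
      nlinarith [(show (0:ℝ) ≤ (b (n+1):ℝ) from Nat.cast_nonneg _)]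
    calc (∏ j ∈ Icc 1 n, (b j : ℝ) / ((a j : ℝ) + (b j : ℝ)))
          * ((b (n+1):ℝ)/((a (n+1) : ℝ) + (b (n+1) : ℝ))) * (b (n+1+1) : ℝ)
        = (∏ j ∈ Icc 1 n, (b j : ℝ) / ((a j : ℝ) + (b j : ℝ)))
          * ((b (n+1):ℝ)/((a (n+1) : ℝ) + (b (n+1) : ℝ)) * (b (n+1+1) : ℝ)) := by ring
      _ ≤ (∏ j ∈ Icc 1 n, (b j : ℝ) / ((a j : ℝ) + (b j : ℝ))) * (b (n+1) : ℝ) :=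
          mul_le_mul_of_nonneg_left step hP
      _ ≤ (b 1 : ℝ) := ihn (fun j h1 h2 => hpos j h1 (by omega)) (fun j h1 h2 => hle j h1 (by omega))

lemma key16 (a b : ℕ → ℕ) (hb1 : b 1 = 1) :
    ∀ m, 1 ≤ m →
    (∀ i, 1 ≤ i → i ≤ m → 0 < a i) →
    (∀ i, 1 ≤ i → i ≤ m → 0 < b i) →
    (∀ i, 1 ≤ i → i < m → b (i + 1) ≤ a i + b i) →
    ∀ d : ℕ, 0 < d → d ≤ a m + b m →
    (∑ i ∈ Icc 1 m,
        ((a i : ℝ) / ((a i : ℝ) + (b i : ℝ))) *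
          (∏ j ∈ Ico 1 i, (b j : ℝ) / ((a j : ℝ) + (b j : ℝ))) *
          ((b i : ℝ) + ∑ j ∈ Ico 1 i, (a j : ℝ))) +
      (∏ i ∈ Icc 1 m, (b i : ℝ) / ((a i : ℝ) + (b i : ℝ))) *
        ((a m : ℝ) + (∑ j ∈ Ico 1 m, (a j : ℝ)) + (d : ℝ))
      ≤ 2 * (m : ℝ) + 2 := by
  intro m hm
  induction m, hm using Nat.le_induction with
  | base =>
    intro ha hb hbi d hd hdm
    simp only [Finset.Icc_self, Finset.sum_singleton, Finset.prod_singleton,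
      Finset.Ico_self, Finset.sum_empty, Finset.prod_empty, hb1, Nat.cast_one]
    have hs : (0:ℝ) < (a 1 : ℝ) + 1 := by positivity
    have hd1 : (d : ℝ) ≤ (a 1 : ℝ) + 1 := by
      have := hdm; rw [hb1] at this; exact_mod_cast this
    rw [div_mul_eq_mul_div, div_mul_eq_mul_div, div_mul_eq_mul_div, ← add_div, div_le_iff₀ hs]
    nlinarith [(show (0:ℝ) ≤ (a 1:ℝ) from Nat.cast_nonneg _), (show (0:ℝ) ≤ (d:ℝ) from Nat.cast_nonneg _)]
  | succ n hn ihn =>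
    intro ha hb hbi d hd hdm
    have ihn' := ihn (fun i h1 h2 => ha i h1 (by omega)) (fun i h1 h2 => hb i h1 (by omega))
      (fun i h1 h2 => hbi i h1 (by omega)) (b (n+1)) (hb (n+1) (by omega) le_rfl)
      (hbi n (by omega) (by omega))
    rw [Finset.sum_Icc_succ_top (by omega : 1 ≤ n + 1),
      Finset.prod_Icc_succ_top (by omega : 1 ≤ n + 1)]
    simp only [Finset.Ico_add_one_right_eq_Icc]
    set P := ∏ j ∈ Icc 1 n, (b j : ℝ) / ((a j : ℝ) + (b j : ℝ)) with hPdef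
    set S := ∑ i ∈ Icc 1 n,
        ((a i : ℝ) / ((a i : ℝ) + (b i : ℝ))) *
          (∏ j ∈ Ico 1 i, (b j : ℝ) / ((a j : ℝ) + (b j : ℝ))) *
          ((b i : ℝ) + ∑ j ∈ Ico 1 i, (a j : ℝ)) with hSdef
    have hP0 : 0 ≤ P := by
      apply Finset.prod_nonneg; intro i _; positivity
    have hPb : P * (b (n+1) : ℝ) ≤ 1 := by
      have := aux_prod16 a b n
        (fun j h1 h2 => by have := ha j h1 (by omega); have := hb j h1 (by omega); omega)
        (fun j h1 h2 => hbi j h1 (by omega))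
      rw [hb1, Nat.cast_one] at this; exact this
    have hs : (0:ℝ) < (a (n+1) : ℝ) + (b (n+1) : ℝ) := by
      have h1 := ha (n+1) (by omega) le_rfl
      have h2 := hb (n+1) (by omega) le_rfl
      have : (0:ℝ) < (a (n+1) : ℝ) := by exact_mod_cast h1
      have : (0:ℝ) ≤ (b (n+1) : ℝ) := Nat.cast_nonneg _
      linarith
    have hdc : (d : ℝ) ≤ (a (n+1) : ℝ) + (b (n+1) : ℝ) := by exact_mod_cast hdm
    set A := ∑ j ∈ Icc 1 n, (a j : ℝ) with hAdef
    have key : ((a (n+1) : ℝ) / ((a (n+1) : ℝ) + (b (n+1) : ℝ))) * P * ((b (n+1) : ℝ) + A)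
        + P * ((b (n+1) : ℝ) / ((a (n+1) : ℝ) + (b (n+1) : ℝ))) * ((a (n+1) : ℝ) + A + (d : ℝ))
        ≤ P * (A + (b (n+1) : ℝ)) + 2 := by
      have hA0 : 0 ≤ A := by
        apply Finset.sum_nonneg; intro i _; positivity
      rw [div_mul_eq_mul_div, div_mul_eq_mul_div, mul_comm P, div_mul_eq_mul_div,
        div_mul_eq_mul_div, ← add_div, div_le_iff₀ hs]
      nlinarith [(show (0:ℝ) ≤ (a (n+1):ℝ) from Nat.cast_nonneg _), (show (0:ℝ) ≤ (b (n+1):ℝ) from Nat.cast_nonneg _),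
        mul_nonneg hP0 (mul_nonneg (show (0:ℝ) ≤ (b (n+1):ℝ) from Nat.cast_nonneg _)
          (sub_nonneg.2 hdc)), mul_nonneg hP0 hA0]
    have hA' : A = (∑ j ∈ Ico 1 n, (a j : ℝ)) + (a n : ℝ) := by
      rw [hAdef, ← Finset.Ico_add_one_right_eq_Icc, Finset.sum_Ico_succ_top (by omega : 1 ≤ n)]
    push_cast
    nlinarith [ihn', key, hA']

/-- Emek–Peleg expected distortion bound: with positive integers `a_1, …, a_m`,
`b_1, …, b_m`, `d` satisfying `b 1 = 1`, `b (i+1) ≤ a i + b i` for `1 ≤ i < m`, and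
`d ≤ a m + b m`, setting `c i = Σ_{j=1}^{i-1} a j`, the expected distortion expression
is at most `2m + 2`. -/
theorem stmt16 (m : ℕ) (hm : 1 ≤ m) (a b : ℕ → ℕ) (d : ℕ)
    (ha : ∀ i, 1 ≤ i → i ≤ m → 0 < a i)
    (hb : ∀ i, 1 ≤ i → i ≤ m → 0 < b i)
    (hd : 0 < d)
    (hb1 : b 1 = 1)
    (hbi : ∀ i, 1 ≤ i → i < m → b (i + 1) ≤ a i + b i)
    (hdm : d ≤ a m + b m) :
    (∑ i ∈ Icc 1 m,
        ((a i : ℝ) / ((a i : ℝ) + (b i : ℝ))) *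
          (∏ j ∈ Ico 1 i, (b j : ℝ) / ((a j : ℝ) + (b j : ℝ))) *
          ((b i : ℝ) + ∑ j ∈ Ico 1 i, (a j : ℝ))) +
      (∏ i ∈ Icc 1 m, (b i : ℝ) / ((a i : ℝ) + (b i : ℝ))) *
        ((a m : ℝ) + (∑ j ∈ Ico 1 m, (a j : ℝ)) + (d : ℝ))
      ≤ 2 * (m : ℝ) + 2 :=
  key16 a b hb1 m hm ha hb hbi d hd hdm
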